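/- For integers j ≥ 1 and parameter ζ, ∑_{i=0}^{j} ∑_{k=0}^{i-1} (-1)^i q^{i(i-1)/2} [j choose i]_q · ζ q^k/(1 - ζ q^k)^2 = - ((q;q)_{j-1}/(ζ;q)_j) · ∑_{k=0}^{j-1} ζ q^k/(1 - ζ q^k). -/

import Mathlib

noncomputable def qPoch (z q : ℝ) (m : ℕ) : ℝ := ∏ j ∈ Finset.range m, (1 - z * q ^ j)

noncomputable def qBinom (q : ℝ) (m l : ℕ) : ℝ :=
  if l ≤ m then qPoch q q m / (qPoch q q l * qPoch q q (m - l)) else 0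

lemma qPoch_succ (z q : ℝ) (m : ℕ) : qPoch z q (m+1) = qPoch z q m * (1 - z * q ^ m) :=
  Finset.prod_range_succ _ _

lemma qPoch_zero (z q : ℝ) : qPoch z q 0 = 1 := rfl

lemma qPoch_q_pos {q : ℝ} (hq0 : 0 < q) (hq1 : q < 1) (m : ℕ) : 0 < qPoch q q m := by
  apply Finset.prod_pos
  intro i _
  have h1 : q * q ^ i ≤ q * 1 := by
    apply mul_le_mul_of_nonneg_left _ hq0.le
    exact pow_le_one₀ hq0.le hq1.le
  linarith

lemma qPoch_q_ne {q : ℝ} (hq0 : 0 < q) (hq1 : q < 1) (m : ℕ) : qPoch q q m ≠ 0 :=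
  (qPoch_q_pos hq0 hq1 m).ne'

lemma one_sub_q_pow_ne {q : ℝ} (hq0 : 0 < q) (hq1 : q < 1) (m : ℕ) : (1 : ℝ) - q * q ^ m ≠ 0 := by
  have h1 : q * q ^ m ≤ q * 1 := by
    apply mul_le_mul_of_nonneg_left _ hq0.le
    exact pow_le_one₀ hq0.le hq1.le
  intro h; nlinarith

lemma qBinom_zero {q : ℝ} (hq0 : 0 < q) (hq1 : q < 1) (m : ℕ) : qBinom q m 0 = 1 := by
  rw [qBinom, if_pos (Nat.zero_le _)]
  simp [qPoch_zero, div_self (qPoch_q_ne hq0 hq1 m)]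

lemma qBinom_self {q : ℝ} (hq0 : 0 < q) (hq1 : q < 1) (m : ℕ) : qBinom q m m = 1 := by
  rw [qBinom, if_pos le_rfl]
  simp [qPoch_zero, div_self (qPoch_q_ne hq0 hq1 m)]

lemma qBinom_of_gt {q : ℝ} {m l : ℕ} (h : m < l) : qBinom q m l = 0 := by
  rw [qBinom, if_neg (by omega)]

lemma qPascal1 {q : ℝ} (hq0 : 0 < q) (hq1 : q < 1) (m k : ℕ) :
    qBinom q (m+1) (k+1) = q^(k+1) * qBinom q m (k+1) + qBinom q m k := by
  rcases lt_or_ge m k with h | h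
  · rw [qBinom_of_gt (by omega), qBinom_of_gt (by omega), qBinom_of_gt (by omega)]
    ring
  rcases eq_or_lt_of_le h with rfl | h
  · simp [qBinom_self hq0 hq1, qBinom_of_gt (Nat.lt_succ_self k)]
  · obtain ⟨d, rfl⟩ : ∃ d, m = k + 1 + d := ⟨m - (k+1), by omega⟩
    rw [qBinom, if_pos (by omega), qBinom, if_pos (by omega), qBinom, if_pos (by omega)]
    have e1 : k + 1 + d + 1 - (k + 1) = d + 1 := by omega
    have e2 : k + 1 + d - (k + 1) = d := by omega
    have e3 : k + 1 + d - k = d + 1 := by omega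
    rw [e1, e2, e3]
    have h1 := qPoch_q_ne hq0 hq1
    rw [show k + 1 + d + 1 = (k + d + 1) + 1 by omega,
      show k + 1 + d = (k + d) + 1 by omega, qPoch_succ, qPoch_succ,
      qPoch_succ q q d, qPoch_succ q q k]
    have hb := qPoch_q_ne hq0 hq1 k
    have hc := qPoch_q_ne hq0 hq1 d
    have hk2 := one_sub_q_pow_ne hq0 hq1 k
    have hd2 := one_sub_q_pow_ne hq0 hq1 d
    have hpow : q ^ (k + d + 1) = q ^ k * q ^ d * q := by
      rw [pow_succ, pow_add]
    have hpow1 : q ^ (k + d) = q ^ k * q ^ d := pow_add q k d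
    rw [hpow, hpow1]
    field_simp
    ring

lemma qPascal2 {q : ℝ} (hq0 : 0 < q) (hq1 : q < 1) (m k : ℕ) (hk : k ≤ m) :
    qBinom q (m+1) (k+1) = qBinom q m (k+1) + q^(m-k) * qBinom q m k := by
  rcases eq_or_lt_of_le hk with rfl | h
  · simp [qBinom_self hq0 hq1, qBinom_of_gt (Nat.lt_succ_self k)]
  · obtain ⟨e, rfl⟩ : ∃ e, m = k + 1 + e := ⟨m - (k+1), by omega⟩
    rw [qBinom, if_pos (by omega), qBinom, if_pos (by omega), qBinom, if_pos (by omega)]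
    have e1 : k + 1 + e + 1 - (k + 1) = e + 1 := by omega
    have e2 : k + 1 + e - (k + 1) = e := by omega
    have e3 : k + 1 + e - k = e + 1 := by omega
    rw [e1, e2, e3]
    have h1 := qPoch_q_ne hq0 hq1
    rw [show k + 1 + e + 1 = (k + e + 1) + 1 by omega,
      show k + 1 + e = (k + e) + 1 by omega, qPoch_succ, qPoch_succ,
      qPoch_succ q q e, qPoch_succ q q k]
    have hb := qPoch_q_ne hq0 hq1 k
    have hc := qPoch_q_ne hq0 hq1 e
    have hk2 := one_sub_q_pow_ne hq0 hq1 k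
    have he2 := one_sub_q_pow_ne hq0 hq1 e
    have hpow : q ^ (k + e + 1) = q ^ k * q ^ e * q := by
      rw [pow_succ, pow_add]
    have hpow1 : q ^ (k + e) = q ^ k * q ^ e := pow_add q k e
    rw [hpow, hpow1]
    field_simp
    ring

lemma tri1 (k : ℕ) : (k+1)*(k+2)/2 = k*(k+1)/2 + (k+1) := by
  have h : (k+1)*(k+2) = k*(k+1) + (k+1)*2 := by ring
  rw [h, Nat.add_mul_div_right _ _ (by norm_num : (0:ℕ) < 2)]

lemma Ssum_rec {q : ℝ} (hq0 : 0 < q) (hq1 : q < 1) (m : ℕ) (ζ : ℝ) :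
    ∑ k ∈ Finset.range (m+2),
        (-1:ℝ)^k * q^(k*(k+1)/2) * qBinom q (m+1) k * (q^k / (1 - ζ*q^k)^2)
      = (∑ k ∈ Finset.range (m+1),
            (-1:ℝ)^k * q^(k*(k+1)/2) * qBinom q m k * (q^k / (1 - ζ*q^k)^2))
        - q^(m+2) * ∑ k ∈ Finset.range (m+1),
            (-1:ℝ)^k * q^(k*(k+1)/2) * qBinom q m k * (q^k / (1 - (q*ζ)*q^k)^2) := by
  rw [Finset.sum_range_succ' (fun k => (-1:ℝ)^k * q^(k*(k+1)/2) * qBinom q (m+1) k * (q^k / (1 - ζ*q^k)^2)) (m+1)]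
  have hstep : ∀ k ∈ Finset.range (m+1),
      (-1:ℝ)^(k+1) * q^((k+1)*(k+1+1)/2) * qBinom q (m+1) (k+1) * (q^(k+1) / (1 - ζ*q^(k+1))^2)
        = (-1:ℝ)^(k+1) * q^((k+1)*(k+1+1)/2) * qBinom q m (k+1) * (q^(k+1) / (1 - ζ*q^(k+1))^2)
          + (-(q^(m+2))) * ((-1:ℝ)^k * q^(k*(k+1)/2) * qBinom q m k * (q^k / (1 - (q*ζ)*q^k)^2)) := by
    intro k hk
    rw [Finset.mem_range] at hk
    have hkm : k ≤ m := by omega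
    rw [qPascal2 hq0 hq1 m k hkm,
      show (k+1)*(k+1+1)/2 = k*(k+1)/2 + (k+1) from tri1 k]
    obtain ⟨d, rfl⟩ : ∃ d, m = k + d := ⟨m - k, by omega⟩
    have e1 : k + d - k = d := by omega
    rw [e1, pow_add q (k*(k+1)/2) (k+1)]
    have hp1 : q^(k+d+2) = q^k * q^d * q^2 := by rw [pow_add, pow_add]
    have hp2 : (q:ℝ)^(k+1) = q^k * q := pow_succ q k
    rw [hp1, hp2]
    ring
  rw [Finset.sum_congr rfl hstep, Finset.sum_add_distrib]
  have hzero : (-1:ℝ)^0 * q^(0*(0+1)/2) * qBinom q (m+1) 0 * (q^0 / (1 - ζ*q^0)^2)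
      = (-1:ℝ)^0 * q^(0*(0+1)/2) * qBinom q m 0 * (q^0 / (1 - ζ*q^0)^2) := by
    rw [qBinom_zero hq0 hq1, qBinom_zero hq0 hq1]
  rw [hzero, add_right_comm]
  have h4 : (∑ x ∈ Finset.range (m+1), ((-1:ℝ)^(x+1) * q^((x+1)*(x+1+1)/2) * qBinom q m (x+1) * (q^(x+1) / (1 - ζ*q^(x+1))^2)))
        + ((-1:ℝ)^0 * q^(0*(0+1)/2) * qBinom q m 0 * (q^0 / (1 - ζ*q^0)^2))
      = ∑ k ∈ Finset.range (m+2), (-1:ℝ)^k * q^(k*(k+1)/2) * qBinom q m k * (q^k / (1 - ζ*q^k)^2) :=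
    (Finset.sum_range_succ' (fun k => (-1:ℝ)^k * q^(k*(k+1)/2) * qBinom q m k * (q^k / (1 - ζ*q^k)^2)) (m+1)).symm
  rw [h4, Finset.sum_range_succ (fun k => (-1:ℝ)^k * q^(k*(k+1)/2) * qBinom q m k * (q^k / (1 - ζ*q^k)^2)) (m+1),
    qBinom_of_gt (Nat.lt_succ_self m), ← Finset.mul_sum]
  ring

lemma qPoch_shift (ζ q : ℝ) (n : ℕ) :
    qPoch ζ q (n+1) = qPoch (q*ζ) q n * (1 - ζ) := by
  rw [qPoch, qPoch, Finset.prod_range_succ' (fun k => (1 - ζ * q ^ k)) n]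
  congr 1
  · apply Finset.prod_congr rfl
    intro k _
    rw [pow_succ]
    ring
  · simp

lemma key_sums {q : ℝ} (ζ : ℝ) (m : ℕ)
    (h : ∀ k, k ≤ m + 1 → 1 - ζ * q ^ k ≠ 0) :
    (1 - ζ*q^(m+1)) * (∑ k ∈ Finset.range (m+1), q^k / (1 - ζ*q^k))
      - q^(m+2) * ((1 - ζ) * ∑ k ∈ Finset.range (m+1), q^k / (1 - (q*ζ)*q^k))
    = (1 - q*q^m) * ∑ k ∈ Finset.range (m+2), q^k / (1 - ζ*q^k) := by
  have hS3' : ∑ k ∈ Finset.range (m+2), q^k / (1 - ζ*q^k)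
      = (∑ k ∈ Finset.range (m+1), q^(k+1) / (1 - ζ*q^(k+1))) + q^0 / (1 - ζ*q^0) :=
    Finset.sum_range_succ' (fun k => q^k / (1 - ζ*q^k)) (m+1)
  have hS3 : ∑ k ∈ Finset.range (m+2), q^k / (1 - ζ*q^k)
      = (∑ k ∈ Finset.range (m+1), q^k / (1 - ζ*q^k)) + q^(m+1) / (1 - ζ*q^(m+1)) :=
    Finset.sum_range_succ (fun k => q^k / (1 - ζ*q^k)) (m+1)
  have hS2 : q * ∑ k ∈ Finset.range (m+1), q^k / (1 - (q*ζ)*q^k)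
      = ∑ k ∈ Finset.range (m+1), q^(k+1) / (1 - ζ*q^(k+1)) := by
    rw [Finset.mul_sum]
    apply Finset.sum_congr rfl
    intro k _
    rw [mul_div_assoc', mul_comm q (q^k), ← pow_succ,
      show 1 - (q*ζ)*q^k = 1 - ζ*q^(k+1) by rw [pow_succ]; ring]
  set S1 := ∑ k ∈ Finset.range (m+1), q^k / (1 - ζ*q^k) with hS1def
  set S2 := ∑ k ∈ Finset.range (m+1), q^k / (1 - (q*ζ)*q^k) with hS2def
  set T := ∑ k ∈ Finset.range (m+1), q^(k+1) / (1 - ζ*q^(k+1)) with hTdef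
  set S3 := ∑ k ∈ Finset.range (m+2), q^k / (1 - ζ*q^k) with hS3def
  have e1 : S1 = S3 - q^(m+1) / (1 - ζ*q^(m+1)) := by rw [hS3]; ring
  have e2 : T = S3 - q^0 / (1 - ζ*q^0) := by rw [hS3']; ring
  have e3 : q^(m+2) * ((1 - ζ) * S2) = q^(m+1) * ((1 - ζ) * T) := by
    rw [← hS2, pow_succ]
    ring
  have hu : q^(m+1) / (1 - ζ*q^(m+1)) * (1 - ζ*q^(m+1)) = q^(m+1) :=
    div_mul_cancel₀ _ (h (m+1) le_rfl)
  have hv : q^0 / (1 - ζ*q^0) * (1 - ζ*q^0) = q^0 :=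
    div_mul_cancel₀ _ (h 0 (by omega))
  rw [e1, e3, e2]
  have hpow : q^(m+1) = q * q^m := by rw [pow_succ]; ring
  simp only [pow_zero] at hv ⊢
  linear_combination (-1:ℝ)*hu + q^(m+1)*hv + (-S3)*hpow

lemma qPoch_ne_zero {ζ q : ℝ} {n : ℕ} (h : ∀ k, k < n → 1 - ζ * q ^ k ≠ 0) :
    qPoch ζ q n ≠ 0 := by
  rw [qPoch]
  exact Finset.prod_ne_zero_iff.mpr (fun k hk => h k (Finset.mem_range.mp hk))

lemma Dsum {q : ℝ} (hq0 : 0 < q) (hq1 : q < 1) :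
    ∀ (m : ℕ) (ζ : ℝ), (∀ k, k ≤ m → 1 - ζ * q ^ k ≠ 0) →
    ∑ k ∈ Finset.range (m+1),
        (-1:ℝ)^k * q^(k*(k+1)/2) * qBinom q m k * (q^k / (1 - ζ*q^k)^2)
      = qPoch q q m / qPoch ζ q (m+1) *
          ∑ k ∈ Finset.range (m+1), q^k / (1 - ζ*q^k) := by
  intro m
  induction m with
  | zero =>
    intro ζ h
    have h0 := h 0 le_rfl
    rw [Finset.sum_range_one, Finset.sum_range_one,
      qBinom_zero hq0 hq1, qPoch_zero,
      show qPoch ζ q (0+1) = 1 - ζ * q ^ 0 by rw [qPoch, Finset.prod_range_one]]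
    simp only [pow_zero, mul_one, one_mul] at h0 ⊢
    rw [sq]
    field_simp
    norm_num
  | succ m ih =>
    intro ζ h
    have hζ' : ∀ k, k ≤ m → 1 - ζ * q ^ k ≠ 0 := fun k hk => h k (by omega)
    have hqζ : ∀ k, k ≤ m → 1 - (q*ζ) * q ^ k ≠ 0 := by
      intro k hk
      have := h (k+1) (by omega)
      rw [pow_succ] at this
      intro hc; apply this; rw [← hc]; ring
    rw [Ssum_rec hq0 hq1 m ζ, ih ζ hζ', ih (q*ζ) hqζ]
    have hQ1 : qPoch ζ q (m+1) ≠ 0 :=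
      qPoch_ne_zero (fun k hk => h k (by omega))
    have hQ2 : qPoch (q*ζ) q (m+1) ≠ 0 :=
      qPoch_ne_zero (fun k hk => hqζ k (by omega))
    have hW1 : qPoch ζ q (m+2) = qPoch ζ q (m+1) * (1 - ζ*q^(m+1)) := qPoch_succ ζ q (m+1)
    have hW2 : qPoch ζ q (m+2) = qPoch (q*ζ) q (m+1) * (1 - ζ) := qPoch_shift ζ q (m+1)
    have hP : qPoch q q (m+1) = qPoch q q m * (1 - q*q^m) := qPoch_succ q q m
    have hc1 : (1 - ζ*q^(m+1)) ≠ 0 := h (m+1) le_rfl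
    have hc2 : (1 - ζ) ≠ 0 := by
      have := h 0 (by omega); simpa using this
    have key := key_sums ζ m (fun k hk => h k hk)
    have e1 : qPoch q q m / qPoch ζ q (m+1) * (∑ k ∈ Finset.range (m+1), q^k / (1 - ζ*q^k))
        = qPoch q q m * ((1 - ζ*q^(m+1)) * ∑ k ∈ Finset.range (m+1), q^k / (1 - ζ*q^k)) / qPoch ζ q (m+2) := by
      rw [hW1]
      field_simp
      ring
    have e2 : q^(m+2) * (qPoch q q m / qPoch (q*ζ) q (m+1) * (∑ k ∈ Finset.range (m+1), q^k / (1 - (q*ζ)*q^k)))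
        = qPoch q q m * (q^(m+2) * ((1 - ζ) * ∑ k ∈ Finset.range (m+1), q^k / (1 - (q*ζ)*q^k))) / qPoch ζ q (m+2) := by
      rw [hW2]
      field_simp
    rw [e1, e2, div_sub_div_same, ← mul_sub, key, hP]
    ring

lemma PS {q : ℝ} (hq0 : 0 < q) (hq1 : q < 1) (m : ℕ) :
    ∀ k : ℕ, ∑ i ∈ Finset.range (k+1), (-1:ℝ)^i * q^(i*(i-1)/2) * qBinom q (m+1) i
      = (-1:ℝ)^k * q^(k*(k+1)/2) * qBinom q m k := by
  intro k
  induction k with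
  | zero =>
    rw [Finset.sum_range_one, qBinom_zero hq0 hq1, qBinom_zero hq0 hq1]
  | succ k ih =>
    rw [Finset.sum_range_succ, ih]
    have hexp : (k+1) * ((k+1) - 1) / 2 = k*(k+1)/2 := by
      rw [Nat.add_sub_cancel, Nat.mul_comm]
    rw [hexp, qPascal1 hq0 hq1 m k,
      show (k+1)*(k+1+1)/2 = k*(k+1)/2 + (k+1) from tri1 k,
      pow_add q (k*(k+1)/2) (k+1)]
    ring

lemma sum_swap_tri (f : ℕ → ℕ → ℝ) (n : ℕ) :
    ∑ i ∈ Finset.range n, ∑ k ∈ Finset.range i, f i k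
      = ∑ k ∈ Finset.range n, ∑ i ∈ Finset.Ico (k+1) n, f i k := by
  induction n with
  | zero => simp
  | succ n ih =>
    rw [Finset.sum_range_succ, ih, Finset.sum_range_succ,
      show Finset.Ico (n+1) (n+1) = ∅ by simp]
    rw [Finset.sum_empty, add_zero, ← Finset.sum_add_distrib]
    apply Finset.sum_congr rfl
    intro k hk
    rw [Finset.mem_range] at hk
    rw [Finset.sum_Ico_succ_top (by omega : k+1 ≤ n)]

theorem alternating_qbinom_sum_deriv (q ζ : ℝ) (j : ℕ) (hj : 1 ≤ j)
    (hq0 : 0 < q) (hq1 : q < 1) (hne : ∀ k < j, 1 - ζ * q ^ k ≠ 0) :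
    ∑ i ∈ Finset.range (j + 1), ∑ k ∈ Finset.range i,
        (-1 : ℝ) ^ i * q ^ (i * (i - 1) / 2) * qBinom q j i *
          (ζ * q ^ k / (1 - ζ * q ^ k) ^ 2)
      = -(qPoch q q (j - 1) / qPoch ζ q j) *
          ∑ k ∈ Finset.range j, ζ * q ^ k / (1 - ζ * q ^ k) := by
  obtain ⟨m, rfl⟩ : ∃ m, j = m + 1 := ⟨j - 1, by omega⟩
  have hm1 : m + 1 - 1 = m := by omega
  rw [hm1]
  rw [sum_swap_tri (fun i k => (-1:ℝ)^i * q^(i*(i-1)/2) * qBinom q (m+1) i *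
      (ζ * q ^ k / (1 - ζ * q ^ k) ^ 2)) (m+1+1)]
  have hinner : ∀ k ∈ Finset.range (m+1+1),
      ∑ i ∈ Finset.Ico (k+1) (m+1+1), (-1:ℝ)^i * q^(i*(i-1)/2) * qBinom q (m+1) i *
          (ζ * q ^ k / (1 - ζ * q ^ k) ^ 2)
        = (∑ i ∈ Finset.Ico (k+1) (m+1+1), (-1:ℝ)^i * q^(i*(i-1)/2) * qBinom q (m+1) i) *
            (ζ * q ^ k / (1 - ζ * q ^ k) ^ 2) := by
    intro k _
    rw [Finset.sum_mul]
  rw [Finset.sum_congr rfl hinner]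
  have hIco : ∀ k, k ≤ m + 1 →
      ∑ i ∈ Finset.Ico (k+1) (m+1+1), (-1:ℝ)^i * q^(i*(i-1)/2) * qBinom q (m+1) i
        = - ((-1:ℝ)^k * q^(k*(k+1)/2) * qBinom q m k) := by
    intro k hk
    rw [Finset.sum_Ico_eq_sub _ (by omega : k + 1 ≤ m + 1 + 1)]
    rw [PS hq0 hq1 m (m+1), PS hq0 hq1 m k, qBinom_of_gt (Nat.lt_succ_self m)]
    ring
  -- last index k = m+1 contributes zero; handle all k in range (m+2)
  have hfin : ∑ k ∈ Finset.range (m+1+1),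
      (∑ i ∈ Finset.Ico (k+1) (m+1+1), (-1:ℝ)^i * q^(i*(i-1)/2) * qBinom q (m+1) i) *
        (ζ * q ^ k / (1 - ζ * q ^ k) ^ 2)
      = ∑ k ∈ Finset.range (m+1+1),
          (- ((-1:ℝ)^k * q^(k*(k+1)/2) * qBinom q m k)) * (ζ * q ^ k / (1 - ζ * q ^ k) ^ 2) := by
    apply Finset.sum_congr rfl
    intro k hk
    rw [Finset.mem_range] at hk
    rw [hIco k (by omega)]
  rw [hfin, Finset.sum_range_succ, qBinom_of_gt (Nat.lt_succ_self m)]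
  have hstep : ∀ k ∈ Finset.range (m+1),
      (- ((-1:ℝ)^k * q^(k*(k+1)/2) * qBinom q m k)) * (ζ * q ^ k / (1 - ζ * q ^ k) ^ 2)
        = (-ζ) * ((-1:ℝ)^k * q^(k*(k+1)/2) * qBinom q m k * (q^k / (1 - ζ*q^k)^2)) := by
    intro k _
    ring
  rw [Finset.sum_congr rfl hstep, ← Finset.mul_sum,
    Dsum hq0 hq1 m ζ (fun k hk => hne k (by omega))]
  simp only [mul_zero, zero_mul, neg_zero, add_zero]
  have hr : ∀ k ∈ Finset.range (m+1),
      ζ * q ^ k / (1 - ζ * q ^ k) = ζ * (q ^ k / (1 - ζ * q ^ k)) :=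
    fun k _ => mul_div_assoc ζ _ _
  rw [Finset.sum_congr rfl hr, ← Finset.mul_sum]
  ring
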